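/- Fix k > 0 and define, on the open set of (a,c) ∈ ℝ² with c < 0 and k² < c² − 4a, the functions M(a,c) := 2π − (π/k)(√(c² − 4a) + c) and P(a,c) := −cπ + (π/(4k))·(√(c² − 4a) + c)². Then at every such (a,c) the Jacobian determinant satisfies ∂_aM·∂_cP − ∂_cM·∂_aP = −2π²/(k·√(c² − 4a)); in particular it is nonzero, so the map (a,c) ↦ (M,P) has invertible derivative throughout the existence region. -/

import Mathlib

/-- The Jacobian `{M,P}_{a,c}` of the mass and momentum of Benjamin's periodic
traveling waves of the Benjamin–Ono equation equals `−2π²/(k√(c²−4a))` and in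
particular is nonzero throughout the existence region `c < 0`, `k² < c² − 4a`. -/
theorem stmt_12 (k : ℝ) (hk : 0 < k) (M P : ℝ → ℝ → ℝ)
    (hM : ∀ a c : ℝ, M a c
      = 2 * Real.pi - (Real.pi / k) * (Real.sqrt (c ^ 2 - 4 * a) + c))
    (hP : ∀ a c : ℝ, P a c
      = -c * Real.pi + (Real.pi / (4 * k)) * (Real.sqrt (c ^ 2 - 4 * a) + c) ^ 2) :
    ∀ a c : ℝ, c < 0 → k ^ 2 < c ^ 2 - 4 * a →
      (deriv (fun a' => M a' c) a * deriv (fun c' => P a c') c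
          - deriv (fun c' => M a c') c * deriv (fun a' => P a' c) a
        = -(2 * Real.pi ^ 2) / (k * Real.sqrt (c ^ 2 - 4 * a)))
      ∧ deriv (fun a' => M a' c) a * deriv (fun c' => P a c') c
          - deriv (fun c' => M a c') c * deriv (fun a' => P a' c) a ≠ 0 := by
  intro a c hc hlt
  have hq : (0:ℝ) < c ^ 2 - 4 * a := lt_trans (by positivity) hlt
  set s := Real.sqrt (c ^ 2 - 4 * a) with hsdef
  have hs : 0 < s := Real.sqrt_pos.mpr hq
  have hs2 : s ^ 2 = c ^ 2 - 4 * a := Real.sq_sqrt hq.le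
  have hsne : s ≠ 0 := hs.ne'
  have hkne : k ≠ 0 := hk.ne'
  -- derivative of a' ↦ sqrt (c² - 4 a') at a
  have hinner_a : HasDerivAt (fun a' : ℝ => c ^ 2 - 4 * a') (-4) a := by
    simpa [Pi.add_def, Pi.sub_def, Pi.pow_def] using (hasDerivAt_const a (c ^ 2)).sub ((hasDerivAt_id a).const_mul 4)
  have hsqrt_a : HasDerivAt (fun a' : ℝ => Real.sqrt (c ^ 2 - 4 * a'))
      ((-4) / (2 * s)) a := hinner_a.sqrt hq.ne'
  -- derivative of c' ↦ sqrt (c'² - 4 a) at c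
  have hinner_c : HasDerivAt (fun c' : ℝ => c' ^ 2 - 4 * a) (2 * c) c := by
    simpa [Pi.add_def, Pi.sub_def, Pi.pow_def] using ((hasDerivAt_pow 2 c).sub (hasDerivAt_const c (4 * a)))
  have hsqrt_c : HasDerivAt (fun c' : ℝ => Real.sqrt (c' ^ 2 - 4 * a))
      ((2 * c) / (2 * s)) c := hinner_c.sqrt hq.ne'
  -- M derivatives
  have hMa : HasDerivAt (fun a' => M a' c)
      (-((Real.pi / k) * ((-4) / (2 * s)))) a := by
    have : HasDerivAt (fun a' : ℝ =>
        2 * Real.pi - (Real.pi / k) * (Real.sqrt (c ^ 2 - 4 * a') + c))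
        (-((Real.pi / k) * ((-4) / (2 * s)))) a := by
      simpa [Pi.add_def, Pi.sub_def, Pi.pow_def] using (hasDerivAt_const a (2 * Real.pi)).sub
        (((hsqrt_a.add_const c)).const_mul (Real.pi / k))
    exact this.congr_of_eventuallyEq
      (Filter.Eventually.of_forall fun x => (hM x c))
  have hMc : HasDerivAt (fun c' => M a c')
      (-((Real.pi / k) * ((2 * c) / (2 * s) + 1))) c := by
    have : HasDerivAt (fun c' : ℝ =>
        2 * Real.pi - (Real.pi / k) * (Real.sqrt (c' ^ 2 - 4 * a) + c'))
        (-((Real.pi / k) * ((2 * c) / (2 * s) + 1))) c := by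
      simpa [Pi.add_def, Pi.sub_def, Pi.pow_def] using (hasDerivAt_const c (2 * Real.pi)).sub
        ((hsqrt_c.add (hasDerivAt_id c)).const_mul (Real.pi / k))
    exact this.congr_of_eventuallyEq
      (Filter.Eventually.of_forall fun x => (hM a x))
  -- P derivatives
  have hPa : HasDerivAt (fun a' => P a' c)
      ((Real.pi / (4 * k)) * (2 * (s + c) * ((-4) / (2 * s)))) a := by
    have hpow : HasDerivAt (fun a' : ℝ => (Real.sqrt (c ^ 2 - 4 * a') + c) ^ 2)
        (2 * (s + c) * ((-4) / (2 * s))) a := by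
      simpa [Pi.add_def, Pi.sub_def, Pi.pow_def] using (hsqrt_a.add_const c).pow 2
    have : HasDerivAt (fun a' : ℝ =>
        -c * Real.pi + (Real.pi / (4 * k)) * (Real.sqrt (c ^ 2 - 4 * a') + c) ^ 2)
        ((Real.pi / (4 * k)) * (2 * (s + c) * ((-4) / (2 * s)))) a := by
      simpa [Pi.add_def, Pi.sub_def, Pi.pow_def] using (hasDerivAt_const a (-c * Real.pi)).add
        (hpow.const_mul (Real.pi / (4 * k)))
    exact this.congr_of_eventuallyEq
      (Filter.Eventually.of_forall fun x => (hP x c))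
  have hPc : HasDerivAt (fun c' => P a c')
      (-Real.pi + (Real.pi / (4 * k)) * (2 * (s + c) * ((2 * c) / (2 * s) + 1))) c := by
    have hpow : HasDerivAt (fun c' : ℝ => (Real.sqrt (c' ^ 2 - 4 * a) + c') ^ 2)
        (2 * (s + c) * ((2 * c) / (2 * s) + 1)) c := by
      simpa [Pi.add_def, Pi.sub_def, Pi.pow_def] using (hsqrt_c.add (hasDerivAt_id c)).pow 2
    have : HasDerivAt (fun c' : ℝ =>
        -c' * Real.pi + (Real.pi / (4 * k)) * (Real.sqrt (c' ^ 2 - 4 * a) + c') ^ 2)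
        (-Real.pi + (Real.pi / (4 * k)) * (2 * (s + c) * ((2 * c) / (2 * s) + 1))) c := by
      have hlin : HasDerivAt (fun c' : ℝ => -c' * Real.pi) (-Real.pi) c := by
        simpa using ((hasDerivAt_id c).neg.mul_const Real.pi)
      simpa [Pi.add_def, Pi.sub_def, Pi.pow_def] using hlin.add (hpow.const_mul (Real.pi / (4 * k)))
    exact this.congr_of_eventuallyEq
      (Filter.Eventually.of_forall fun x => (hP a x))
  rw [hMa.deriv, hMc.deriv, hPa.deriv, hPc.deriv]
  have key : -((Real.pi / k) * ((-4) / (2 * s))) *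
        (-Real.pi + (Real.pi / (4 * k)) * (2 * (s + c) * ((2 * c) / (2 * s) + 1)))
      - -((Real.pi / k) * ((2 * c) / (2 * s) + 1)) *
        ((Real.pi / (4 * k)) * (2 * (s + c) * ((-4) / (2 * s))))
      = -(2 * Real.pi ^ 2) / (k * s) := by
    field_simp
    ring
  refine ⟨key, ?_⟩
  rw [key]
  have hpi := Real.pi_pos
  exact div_ne_zero (by nlinarith) (by positivity)
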